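/- arXiv:1810.04539 — 4 statements merged into one kernel-verified Lean document; each statement's English description precedes it below -/
import Mathlib

section
/- Let g(x) = G(x - x*) + x* be a linear map on R^d. Consider the iteration x_i = g(y_{i-1}), y_i = sum_{j=1}^i (alpha_j^{(i)} x_j + beta_j^{(i)} y_{j-1}) with y_0 = x_0, where for each i the coefficients satisfy sum_j (alpha_j^{(i)} + beta_j^{(i)}) = 1 and alpha_i^{(i)} ≠ 0. Then for every N there exists a polynomial p_N of degree exactly N with p_N(1) = 1 such that y_N - x* = p_N(G)(x_0 - x*). -/
open Matrix Polynomial Finset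

private lemma sum_mulVec' {d : ℕ} {ι : Type*} (s : Finset ι)
    (M : ι → Matrix (Fin d) (Fin d) ℝ) (v : Fin d → ℝ) :
    (∑ j ∈ s, M j).mulVec v = ∑ j ∈ s, (M j).mulVec v := by
  induction s using Finset.cons_induction with
  | empty => simp [Matrix.zero_mulVec]
  | cons a s ha ih => simp [Finset.sum_cons, Matrix.add_mulVec, ih]

/-- For the linear iteration `x_i = g(y_{i-1})`,
`y_i = ∑_{j=1}^i (α_j^{(i)} x_j + β_j^{(i)} y_{j-1})` with `y_0 = x_0`, where
`g(x) = G(x - x*) + x*`, the coefficients of each combination sum to one and the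
leading coefficient `α_i^{(i)}` is nonzero, every iterate satisfies
`y_N - x* = p_N(G)(x_0 - x*)` for some polynomial `p_N` of degree exactly `N`
with `p_N(1) = 1`. -/
theorem rna_iterates_are_polynomials
    (d : ℕ) (G : Matrix (Fin d) (Fin d) ℝ) (xstar : Fin d → ℝ)
    (g : (Fin d → ℝ) → (Fin d → ℝ))
    (hg : ∀ v, g v = G.mulVec (v - xstar) + xstar)
    (x y : ℕ → (Fin d → ℝ))
    (α β : ℕ → ℕ → ℝ)
    (hy0 : y 0 = x 0)
    (hx : ∀ i, 1 ≤ i → x i = g (y (i - 1)))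
    (hy : ∀ i, 1 ≤ i →
      y i = ∑ j ∈ Finset.Icc 1 i, (α i j • x j + β i j • y (j - 1)))
    (hsum : ∀ i, 1 ≤ i → ∑ j ∈ Finset.Icc 1 i, (α i j + β i j) = 1)
    (hα : ∀ i, 1 ≤ i → α i i ≠ 0) :
    ∀ N : ℕ, ∃ p : Polynomial ℝ,
      p.degree = (N : ℕ) ∧ p.eval 1 = 1 ∧
      y N - xstar = (Polynomial.aeval G p).mulVec (x 0 - xstar) := by
  intro N
  induction N using Nat.strong_induction_on with
  | _ N ih =>
    rcases Nat.eq_zero_or_pos N with hN | hN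
    · subst hN
      refine ⟨1, by simp, by simp, ?_⟩
      simp [hy0, Matrix.one_mulVec]
    · -- choose the previous polynomials
      choose q0 hq0 using ih
      set q : ℕ → Polynomial ℝ := fun m => if h : m < N then q0 m h else 0 with hqdef
      have hq : ∀ m (h : m < N), q m = q0 m h := by
        intro m h; simp [hqdef, h]
      have hqdeg : ∀ m, m < N → (q m).degree = (m : ℕ) := by
        intro m h; rw [hq m h]; exact (hq0 m h).1
      have hqeval : ∀ m, m < N → (q m).eval 1 = 1 := by
        intro m h; rw [hq m h]; exact (hq0 m h).2.1
      have hqvec : ∀ m, m < N →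
          y m - xstar = (Polynomial.aeval G (q m)).mulVec (x 0 - xstar) := by
        intro m h; rw [hq m h]; exact (hq0 m h).2.2
      have hmem : ∀ j ∈ Finset.Icc 1 N, j - 1 < N := by
        intro j hj
        rw [Finset.mem_Icc] at hj
        omega
      refine ⟨∑ j ∈ Finset.Icc 1 N, (C (α N j) * X + C (β N j)) * q (j - 1), ?_, ?_, ?_⟩
      · -- degree
        have hcoeff : (∑ j ∈ Finset.Icc 1 N, (C (α N j) * X + C (β N j)) * q (j - 1)).coeff N
            = α N N * (q (N - 1)).coeff (N - 1) := by
          rw [Polynomial.finset_sum_coeff]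
          rw [Finset.sum_eq_single N]
          · have hXq : (X * q (N - 1)).coeff N = (q (N - 1)).coeff (N - 1) := by
              obtain ⟨m, rfl⟩ : ∃ m, N = m + 1 := ⟨N - 1, by omega⟩
              simp [Polynomial.coeff_X_mul]
            have hqN : (q (N - 1)).coeff N = 0 := by
              apply Polynomial.coeff_eq_zero_of_degree_lt
              rw [hqdeg (N - 1) (by omega)]
              exact_mod_cast Nat.sub_lt hN one_pos
            rw [add_mul, Polynomial.coeff_add, mul_assoc, Polynomial.coeff_C_mul,
              Polynomial.coeff_C_mul, hXq, hqN, mul_zero, add_zero]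
          · intro j hj hjne
            apply Polynomial.coeff_eq_zero_of_degree_lt
            have hj' := Finset.mem_Icc.mp hj
            have hdlin : (C (α N j) * X + C (β N j)).degree ≤ 1 := by
              apply le_trans (Polynomial.degree_add_le _ _)
              refine max_le (le_trans (Polynomial.degree_mul_le _ _) ?_) ?_
              · calc (C (α N j)).degree + X.degree ≤ 0 + 1 :=
                    add_le_add Polynomial.degree_C_le Polynomial.degree_X_le
                  _ = 1 := by norm_num
              · exact le_trans Polynomial.degree_C_le (by norm_num)
            calc ((C (α N j) * X + C (β N j)) * q (j - 1)).degree
                ≤ (C (α N j) * X + C (β N j)).degree + (q (j - 1)).degree :=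
                  Polynomial.degree_mul_le _ _
              _ ≤ 1 + ((j - 1 : ℕ) : WithBot ℕ) := by
                  rw [hqdeg (j - 1) (hmem j hj)]
                  exact add_le_add hdlin le_rfl
              _ = ((j : ℕ) : WithBot ℕ) := by
                  rw [show ((1 : WithBot ℕ)) = ((1 : ℕ) : WithBot ℕ) from rfl,
                    ← Nat.cast_add]
                  congr 1
                  omega
              _ < ((N : ℕ) : WithBot ℕ) := by
                  exact_mod_cast Nat.cast_lt.mpr (by omega)
          · intro hNmem
            exact absurd (Finset.mem_Icc.mpr ⟨hN, le_refl N⟩) hNmem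
        have hlead : (q (N - 1)).coeff (N - 1) ≠ 0 := by
          have hd := hqdeg (N - 1) (by omega)
          have : (q (N - 1)).natDegree = N - 1 := Polynomial.natDegree_eq_of_degree_eq_some hd
          rw [← this]
          exact Polynomial.coeff_ne_zero_of_eq_degree (by rw [this, hd])
        apply Polynomial.degree_eq_of_le_of_coeff_ne_zero
        · apply le_trans (Polynomial.degree_sum_le _ _)
          apply Finset.sup_le
          intro j hj
          have hj' := Finset.mem_Icc.mp hj
          have hdlin : (C (α N j) * X + C (β N j)).degree ≤ 1 := by
            apply le_trans (Polynomial.degree_add_le _ _)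
            refine max_le (le_trans (Polynomial.degree_mul_le _ _) ?_) ?_
            · calc (C (α N j)).degree + X.degree ≤ 0 + 1 :=
                  add_le_add Polynomial.degree_C_le Polynomial.degree_X_le
                _ = 1 := by norm_num
            · exact le_trans Polynomial.degree_C_le (by norm_num)
          calc ((C (α N j) * X + C (β N j)) * q (j - 1)).degree
              ≤ (C (α N j) * X + C (β N j)).degree + (q (j - 1)).degree :=
                Polynomial.degree_mul_le _ _
            _ ≤ 1 + ((j - 1 : ℕ) : WithBot ℕ) := by
                rw [hqdeg (j - 1) (hmem j hj)]
                exact add_le_add hdlin le_rfl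
            _ = ((j : ℕ) : WithBot ℕ) := by
                rw [show ((1 : WithBot ℕ)) = ((1 : ℕ) : WithBot ℕ) from rfl,
                  ← Nat.cast_add]
                congr 1
                omega
            _ ≤ ((N : ℕ) : WithBot ℕ) := by exact_mod_cast Nat.cast_le.mpr hj'.2
        · rw [hcoeff]
          exact mul_ne_zero (hα N hN) hlead
      · -- eval at 1
        rw [Polynomial.eval_finset_sum]
        have : ∀ j ∈ Finset.Icc 1 N,
            (((C (α N j) * X + C (β N j)) * q (j - 1))).eval 1 = α N j + β N j := by
          intro j hj
          simp [Polynomial.eval_mul, hqeval (j - 1) (hmem j hj)]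
        rw [Finset.sum_congr rfl this]
        exact hsum N hN
      · -- vector identity
        have step1 : y N - xstar = ∑ j ∈ Finset.Icc 1 N,
            (α N j • (x j - xstar) + β N j • (y (j - 1) - xstar)) := by
          have hsplit : ∑ j ∈ Finset.Icc 1 N,
              (α N j • (x j - xstar) + β N j • (y (j - 1) - xstar))
              = (∑ j ∈ Finset.Icc 1 N, (α N j • x j + β N j • y (j - 1)))
                - (∑ j ∈ Finset.Icc 1 N, (α N j + β N j)) • xstar := by
            rw [Finset.sum_smul, ← Finset.sum_sub_distrib]
            apply Finset.sum_congr rfl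
            intro j _
            simp only [smul_sub, add_smul]
            abel
          rw [hsplit, hsum N hN, one_smul, ← hy N hN]
        rw [step1]
        have step2 : ∀ j ∈ Finset.Icc 1 N,
            α N j • (x j - xstar) + β N j • (y (j - 1) - xstar)
            = (Polynomial.aeval G ((C (α N j) * X + C (β N j)) * q (j - 1))).mulVec
                (x 0 - xstar) := by
          intro j hj
          have hj' := Finset.mem_Icc.mp hj
          have hxj : x j - xstar = G.mulVec (y (j - 1) - xstar) := by
            rw [hx j hj'.1, hg]
            abel
          have hyj := hqvec (j - 1) (hmem j hj)
          have haev : Polynomial.aeval G ((C (α N j) * X + C (β N j)) * q (j - 1))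
              = (α N j • G + β N j • 1) * Polynomial.aeval G (q (j - 1)) := by
            rw [_root_.map_mul]
            congr 1
            simp [Algebra.algebraMap_eq_smul_one]
          rw [haev, ← Matrix.mulVec_mulVec, Matrix.add_mulVec,
            Matrix.smul_mulVec, Matrix.smul_mulVec, Matrix.one_mulVec,
            ← hyj, ← hxj]
        rw [Finset.sum_congr rfl step2, map_sum, sum_mulVec']
end

section
/- Let G be a d×d real matrix without eigenvalue 1, let g(x) = G(x - x*) + x*, and let Y = [y_0, ..., y_{N-1}], R = [r(y_0), ..., r(y_{N-1})] where y_i - x* = p_i(G)(x_0 - x*) with p_i of degree exactly i and p_i(1) = 1. Let c minimize ||Rc||_2 over c with 1^T c = 1, and set y_extr = (Y - η R) c. Then ||r(y_extr)||_2 ≤ ||I - η(G - I)||_2 · min_{p: deg p ≤ N-1, p(1)=1} ||p(G) r(x_0)||_2, where r(x) = g(x) - x. -/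
open Matrix Polynomial Finset
open scoped Matrix.Norms.L2Operator

/-- Euclidean (ℓ₂) norm of a real vector. -/
noncomputable def vnorm {ι : Type*} [Fintype ι] (v : ι → ℝ) : ℝ :=
  ‖(WithLp.toLp 2 v : EuclideanSpace ℝ ι)‖

lemma vnorm_mulVec_le {d : ℕ} (A : Matrix (Fin d) (Fin d) ℝ) (v : Fin d → ℝ) :
    vnorm (A.mulVec v) ≤ ‖A‖ * vnorm v :=
  A.l2_opNorm_mulVec (WithLp.toLp 2 v)

lemma sum_smul_mulVec {d N : ℕ} (M : Fin N → Matrix (Fin d) (Fin d) ℝ)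
    (c : Fin N → ℝ) (u : Fin d → ℝ) :
    (∑ i, c i • M i).mulVec u = ∑ i, c i • (M i).mulVec u := by
  induction (Finset.univ : Finset (Fin N)) using Finset.induction with
  | empty => simp [Matrix.mulVec_zero]
  | insert a s h ih =>
      simp [Finset.sum_insert h, Matrix.add_mulVec, Matrix.smul_mulVec, ih]

/-- Any polynomial of degree `< n ≤ N` is a linear combination of the `p i`. -/
lemma exists_rep {N : ℕ} (p : Fin N → Polynomial ℝ)
    (hdeg : ∀ i, (p i).degree = (i : ℕ)) :
    ∀ n : ℕ, n ≤ N → ∀ q : Polynomial ℝ, q.degree < (n : ℕ) →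
      ∃ c : Fin N → ℝ, q = ∑ i, c i • p i := by
  intro n
  induction n with
  | zero =>
      intro _ q hq
      have hb : q.degree = ⊥ := Nat.WithBot.lt_zero_iff.mp (by exact_mod_cast hq)
      exact ⟨0, by simp [Polynomial.degree_eq_bot.mp hb]⟩
  | succ n ih =>
      intro hnN q hq
      by_cases hq' : q.degree < (n : ℕ)
      · exact ih (le_of_lt hnN) q hq'
      · have hq0 : q ≠ 0 := by
          intro h
          apply hq'
          rw [h, Polynomial.degree_zero]
          exact WithBot.bot_lt_coe _
        have hdq : q.degree = (n : ℕ) := by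
          have h1 : q.degree ≤ (n : ℕ) := by
            rw [Polynomial.degree_eq_natDegree hq0] at hq ⊢
            exact_mod_cast Nat.lt_succ_iff.mp (by exact_mod_cast hq)
          exact le_antisymm h1 (not_lt.mp hq')
        set i : Fin N := ⟨n, hnN⟩
        have hpi : (p i).degree = (n : ℕ) := hdeg i
        have hpi0 : p i ≠ 0 := by
          intro h; rw [h] at hpi; simp at hpi
        have hplc : (p i).leadingCoeff ≠ 0 := Polynomial.leadingCoeff_ne_zero.mpr hpi0
        have hqlc : q.leadingCoeff ≠ 0 := Polynomial.leadingCoeff_ne_zero.mpr hq0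
        set a : ℝ := q.leadingCoeff / (p i).leadingCoeff with ha
        have ha0 : a ≠ 0 := div_ne_zero hqlc hplc
        have hlc : q.leadingCoeff = (a • p i).leadingCoeff := by
          rw [Polynomial.smul_eq_C_mul, Polynomial.leadingCoeff_mul,
            Polynomial.leadingCoeff_C, ha]
          field_simp
        have hdsm : q.degree = (a • p i).degree := by
          rw [Polynomial.smul_eq_C_mul, Polynomial.degree_mul,
            Polynomial.degree_C ha0, hpi, hdq, zero_add]
        have hsub : (q - a • p i).degree < (n : ℕ) := by
          have := Polynomial.degree_sub_lt hdsm hq0 hlc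
          rwa [hdq] at this
        obtain ⟨c', hc'⟩ := ih (le_of_lt hnN) _ hsub
        refine ⟨c' + Pi.single i a, ?_⟩
        have hsingle : ∑ j, (Pi.single i a : Fin N → ℝ) j • p j = a • p i := by
          rw [Fintype.sum_eq_single i]
          · rw [Pi.single_eq_same]
          · intro j hj
            rw [Pi.single_eq_of_ne hj, zero_smul]
        calc q = (q - a • p i) + a • p i := by ring
          _ = ∑ j, c' j • p j + ∑ j, (Pi.single i a : Fin N → ℝ) j • p j := by
              rw [← hc', hsingle]
          _ = ∑ j, ((c' + Pi.single i a : Fin N → ℝ)) j • p j := by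
              rw [← Finset.sum_add_distrib]
              exact Finset.sum_congr rfl fun j _ => by rw [Pi.add_apply, add_smul]

/-- Convergence rate of (unregularized) RNA on linear iterations:
if `y_i - x* = p_i(G)(x_0 - x*)` with `p_i` of degree exactly `i`, `p_i(1) = 1`,
`c` minimizes `‖R c‖₂` over affine coefficients, and
`y_extr = (Y - η R) c`, then
`‖r(y_extr)‖₂ ≤ ‖I - η (G - I)‖₂ ⋅ min_{deg p ≤ N-1, p(1)=1} ‖p(G) r(x_0)‖₂`. -/
theorem rna_linear_convergence_rate
    (d N : ℕ) (hN : 1 ≤ N)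
    (G : Matrix (Fin d) (Fin d) ℝ) (xstar : Fin d → ℝ)
    (hG : ∀ v : Fin d → ℝ, G.mulVec v = v → v = 0)
    (g : (Fin d → ℝ) → (Fin d → ℝ))
    (hg : ∀ v, g v = G.mulVec (v - xstar) + xstar)
    (x0 : Fin d → ℝ) (y : Fin N → (Fin d → ℝ))
    (p : Fin N → Polynomial ℝ)
    (hdeg : ∀ i, (p i).degree = (i : ℕ))
    (hval : ∀ i, (p i).eval 1 = 1)
    (hy : ∀ i, y i - xstar = (Polynomial.aeval G (p i)).mulVec (x0 - xstar))
    (η : ℝ) (hη : η ≠ 0)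
    (c : Fin N → ℝ) (hc1 : ∑ i, c i = 1)
    (hcopt : ∀ c' : Fin N → ℝ, ∑ i, c' i = 1 →
      vnorm (∑ i, c i • (g (y i) - y i)) ≤ vnorm (∑ i, c' i • (g (y i) - y i)))
    (yextr : Fin d → ℝ)
    (hyextr : yextr = ∑ i, c i • (y i - η • (g (y i) - y i))) :
    vnorm (g yextr - yextr) ≤
      ‖(1 : Matrix (Fin d) (Fin d) ℝ) - η • (G - 1)‖ *
        sInf {t : ℝ | ∃ q : Polynomial ℝ, q.degree ≤ (N - 1 : ℕ) ∧ q.eval 1 = 1 ∧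
          t = vnorm ((Polynomial.aeval G q).mulVec (g x0 - x0))} := by
  set B : Matrix (Fin d) (Fin d) ℝ := G - 1 with hB
  set A : Matrix (Fin d) (Fin d) ℝ := (1 : Matrix (Fin d) (Fin d) ℝ) - η • B with hA
  set u : Fin d → ℝ := x0 - xstar with hu
  -- residual formula
  have hr : ∀ v, g v - v = B.mulVec (v - xstar) := by
    intro v
    rw [hg, hB, Matrix.sub_mulVec, Matrix.one_mulVec]
    abel
  have hry : ∀ i, g (y i) - y i = B.mulVec ((Polynomial.aeval G (p i)).mulVec u) := by
    intro i; rw [hr, hy i]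
  -- B commutes with A and with any aeval G q
  have hcomm : ∀ q : Polynomial ℝ, (Polynomial.aeval G q) * B = B * (Polynomial.aeval G q) := by
    intro q
    have h1 : (Polynomial.aeval G (q * (X - 1)) : Matrix (Fin d) (Fin d) ℝ)
        = Polynomial.aeval G ((X - 1) * q) := by rw [mul_comm]
    simpa [_root_.map_mul, map_sub, hB] using h1
  have hAB : A * B = B * A := by
    rw [hA]
    simp only [sub_mul, mul_sub, one_mul, mul_one, smul_mul_assoc, mul_smul_comm]
  set S : Matrix (Fin d) (Fin d) ℝ := ∑ i, c i • Polynomial.aeval G (p i) with hS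
  -- R c' formula
  have hRc' : ∀ c' : Fin N → ℝ,
      ∑ i, c' i • (g (y i) - y i)
        = B.mulVec ((∑ i, c' i • Polynomial.aeval G (p i)).mulVec u) := by
    intro c'
    rw [sum_smul_mulVec]
    calc ∑ i, c' i • (g (y i) - y i)
        = ∑ i, B.mulVec (c' i • ((Polynomial.aeval G (p i)).mulVec u)) :=
          Finset.sum_congr rfl fun i _ => by rw [hry i, Matrix.mulVec_smul]
      _ = B.mulVec (∑ i, c' i • ((Polynomial.aeval G (p i)).mulVec u)) := by
          simp only [← Matrix.mulVecLin_apply]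
          rw [map_sum]
  have hRc : ∑ i, c i • (g (y i) - y i) = B.mulVec (S.mulVec u) := hRc' c
  -- yextr - xstar
  have hyx : yextr - xstar = A.mulVec (S.mulVec u) := by
    have h1 : yextr - xstar = ∑ i, c i • ((y i - xstar) - η • (g (y i) - y i)) := by
      rw [hyextr]
      have : ∑ i, c i • ((y i - xstar) - η • (g (y i) - y i))
          = ∑ i, c i • (y i - η • (g (y i) - y i)) - (∑ i, c i) • xstar := by
        rw [Finset.sum_smul, ← Finset.sum_sub_distrib]
        congr 1; funext i
        rw [← smul_sub]; congr 1; abel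
      rw [this, hc1, one_smul]
    rw [h1, hA, Matrix.sub_mulVec, Matrix.one_mulVec, Matrix.smul_mulVec]
    have h2 : ∑ i, c i • ((y i - xstar) - η • (g (y i) - y i))
        = (∑ i, c i • (y i - xstar)) - η • ∑ i, c i • (g (y i) - y i) := by
      rw [Finset.smul_sum, ← Finset.sum_sub_distrib]
      congr 1; funext i
      rw [smul_sub, smul_comm]
    rw [h2, hRc]
    congr 1
    calc ∑ i, c i • (y i - xstar) = ∑ i, c i • (Polynomial.aeval G (p i)).mulVec u := by
          congr 1; funext i; rw [hy i]
      _ = S.mulVec u := (sum_smul_mulVec _ _ _).symm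
  -- residual at yextr
  have hfin : g yextr - yextr = A.mulVec (B.mulVec (S.mulVec u)) := by
    rw [hr, hyx, Matrix.mulVec_mulVec, Matrix.mulVec_mulVec, ← hAB,
      ← Matrix.mulVec_mulVec, ← Matrix.mulVec_mulVec]
  -- the min set
  set T := {t : ℝ | ∃ q : Polynomial ℝ, q.degree ≤ (N - 1 : ℕ) ∧ q.eval 1 = 1 ∧
      t = vnorm ((Polynomial.aeval G q).mulVec (g x0 - x0))} with hT
  have hTne : T.Nonempty := by
    refine ⟨vnorm ((Polynomial.aeval G (p ⟨0, hN⟩)).mulVec (g x0 - x0)), p ⟨0, hN⟩, ?_, hval _, rfl⟩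
    rw [hdeg ⟨0, hN⟩]
    exact_mod_cast Nat.cast_le.mpr (Nat.zero_le _)
  -- Rc is a lower bound for T
  have hlb : ∀ t ∈ T, vnorm (∑ i, c i • (g (y i) - y i)) ≤ t := by
    rintro t ⟨q, hqdeg, hq1, rfl⟩
    have hqlt : q.degree < (N : ℕ) := by
      refine lt_of_le_of_lt hqdeg ?_
      exact_mod_cast Nat.cast_lt.mpr (Nat.sub_lt_of_pos_le Nat.one_pos hN)
    obtain ⟨c', hc'⟩ := exists_rep p hdeg N le_rfl q hqlt
    have hc'1 : ∑ i, c' i = 1 := by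
      have := congrArg (Polynomial.eval 1) hc'
      simpa [hq1, hval, Polynomial.eval_finset_sum, Polynomial.eval_smul,
        smul_eq_mul] using this.symm
    have hQ : (Polynomial.aeval G q).mulVec (g x0 - x0)
        = ∑ i, c' i • (g (y i) - y i) := by
      have hsum2 : Polynomial.aeval G q = ∑ i, c' i • Polynomial.aeval G (p i) := by
        rw [hc', map_sum (Polynomial.aeval G) (fun i => c' i • p i) Finset.univ]
        refine Finset.sum_congr rfl fun i _ => ?_
        rw [Polynomial.smul_eq_C_mul, _root_.map_mul, Polynomial.aeval_C]
        simp [Algebra.smul_def]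
      rw [hRc' c', hr x0, ← hu, Matrix.mulVec_mulVec, hcomm q, ← Matrix.mulVec_mulVec,
        hsum2]
    rw [hQ]
    exact hcopt c' hc'1
  have hle1 : vnorm (g yextr - yextr) ≤ ‖A‖ * vnorm (∑ i, c i • (g (y i) - y i)) := by
    rw [hfin, hRc]
    exact vnorm_mulVec_le A _
  have hle2 : vnorm (∑ i, c i • (g (y i) - y i)) ≤ sInf T := le_csInf hTne hlb
  calc vnorm (g yextr - yextr) ≤ ‖A‖ * vnorm (∑ i, c i • (g (y i) - y i)) := hle1
    _ ≤ ‖A‖ * sInf T := mul_le_mul_of_nonneg_left hle2 (norm_nonneg A)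
end

section
/- Let A be a real symmetric n×n matrix with eigenvalues λ_1, ..., λ_n and let β ∈ R. Define the 2n×2n block matrix G = [[0, A], [-βI, (1+β)A]] and for each j the 2×2 matrix G_j = [[0, λ_j], [-β, (1+β)λ_j]]. Then the numerical range of G equals the convex hull of the numerical ranges of G_1, ..., G_n: W(G) = Co{W(G_1), ..., W(G_n)}. -/
open Matrix

/-- The numerical range `W(G) = { x* G x : ‖x‖₂ = 1 }` of a complex matrix. -/
noncomputable def numericalRange {n : Type*} [Fintype n] (G : Matrix n n ℂ) : Set ℂ :=
  {z | ∃ x : EuclideanSpace ℂ n, ‖x‖ = 1 ∧ z = star (x : n → ℂ) ⬝ᵥ G.mulVec x}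

section NRAux

variable {m : Type*} [Fintype m]

lemma star_dot_self (x : m → ℂ) :
    star x ⬝ᵥ x = ((∑ i, Complex.normSq (x i) : ℝ) : ℂ) := by
  simp [dotProduct, Complex.normSq_eq_conj_mul_self]

lemma mem_nr_iff {M : Matrix m m ℂ} {z : ℂ} :
    z ∈ numericalRange M ↔ ∃ x : m → ℂ, star x ⬝ᵥ x = 1 ∧ z = star x ⬝ᵥ M *ᵥ x := by
  constructor
  · rintro ⟨x, hx, rfl⟩
    refine ⟨x, ?_, rfl⟩
    rw [star_dot_self]
    rw [EuclideanSpace.norm_eq] at hx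
    rw [Real.sqrt_eq_one] at hx
    norm_cast
    simpa [Complex.sq_norm] using hx
  · rintro ⟨x, hx, rfl⟩
    refine ⟨WithLp.toLp 2 x, ?_, rfl⟩
    rw [star_dot_self] at hx
    norm_cast at hx
    rw [EuclideanSpace.norm_eq, Real.sqrt_eq_one]
    simpa [Complex.sq_norm] using hx

lemma dot_smul_smul (c e : ℂ) (x y : m → ℂ) :
    star (c • x) ⬝ᵥ (e • y) = (starRingEnd ℂ c * e) * (star x ⬝ᵥ y) := by
  simp [star_smul, smul_dotProduct, dotProduct_smul, smul_eq_mul, Complex.star_def]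
  ring

lemma q_smul (M : Matrix m m ℂ) (c : ℂ) (x : m → ℂ) :
    star (c • x) ⬝ᵥ M *ᵥ (c • x) = (starRingEnd ℂ c * c) * (star x ⬝ᵥ M *ᵥ x) := by
  rw [mulVec_smul, dot_smul_smul]

lemma q_expand (M : Matrix m m ℂ) (α γ : ℂ) (u v : m → ℂ) :
    star (α • u + γ • v) ⬝ᵥ M *ᵥ (α • u + γ • v) =
      (starRingEnd ℂ α * α) * (star u ⬝ᵥ M *ᵥ u)
      + (starRingEnd ℂ α * γ) * (star u ⬝ᵥ M *ᵥ v)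
      + (starRingEnd ℂ γ * α) * (star v ⬝ᵥ M *ᵥ u)
      + (starRingEnd ℂ γ * γ) * (star v ⬝ᵥ M *ᵥ v) := by
  rw [mulVec_add, star_add]
  simp only [add_dotProduct, dotProduct_add, mulVec_smul, dot_smul_smul]
  ring

lemma dot_expand (α γ : ℂ) (u v : m → ℂ) :
    star (α • u + γ • v) ⬝ᵥ (α • u + γ • v) =
      (starRingEnd ℂ α * α) * (star u ⬝ᵥ u)
      + (starRingEnd ℂ α * γ) * (star u ⬝ᵥ v)
      + (starRingEnd ℂ γ * α) * (star v ⬝ᵥ u)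
      + (starRingEnd ℂ γ * γ) * (star v ⬝ᵥ v) := by
  rw [star_add]
  simp only [add_dotProduct, dotProduct_add, dot_smul_smul]
  ring

lemma toeplitz_key (M : Matrix m m ℂ) {x y : m → ℂ}
    (hx : star x ⬝ᵥ x = 1) (hy : star y ⬝ᵥ y = 1)
    (h0 : star x ⬝ᵥ M *ᵥ x = 0) (h1 : star y ⬝ᵥ M *ᵥ y = 1)
    {r : ℝ} (hr0 : 0 ≤ r) (hr1 : r ≤ 1) :
    ∃ z : m → ℂ, star z ⬝ᵥ z = 1 ∧ star z ⬝ᵥ M *ᵥ z = (r : ℂ) := by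
  classical
  set a := star x ⬝ᵥ M *ᵥ y with ha
  set b := star y ⬝ᵥ M *ᵥ x with hb
  set d := b - starRingEnd ℂ a with hd
  -- choose a unimodular phase c with (c*d).im = 0
  obtain ⟨c, hc1, hc2⟩ : ∃ c : ℂ, starRingEnd ℂ c * c = 1 ∧ (c * d).im = 0 := by
    by_cases hdz : d = 0
    · exact ⟨1, by simp, by simp [hdz]⟩
    · refine ⟨(‖d‖ : ℂ)⁻¹ * starRingEnd ℂ d, ?_, ?_⟩
      · have habs : (‖d‖ : ℝ) ≠ 0 := norm_ne_zero_iff.mpr hdz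
        have habsC : (‖d‖ : ℂ) ≠ 0 := Complex.ofReal_ne_zero.mpr habs
        have : starRingEnd ℂ ((‖d‖ : ℂ)⁻¹ * starRingEnd ℂ d)
            * ((‖d‖ : ℂ)⁻¹ * starRingEnd ℂ d)
            = (‖d‖ : ℂ)⁻¹ * (‖d‖ : ℂ)⁻¹ * (d * starRingEnd ℂ d) := by
          simp [_root_.map_mul, Complex.conj_conj, Complex.conj_ofReal]
          ring
        rw [this, Complex.mul_conj]
        rw [Complex.normSq_eq_norm_sq]
        push_cast
        field_simp
      · have : (‖d‖ : ℂ)⁻¹ * starRingEnd ℂ d * d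
            = (‖d‖ : ℂ)⁻¹ * (Complex.normSq d : ℂ) := by
          rw [mul_assoc, ← Complex.normSq_eq_conj_mul_self]
        rw [this]
        have : (‖d‖ : ℂ)⁻¹ = (‖d‖⁻¹ : ℝ) := by push_cast; ring
        rw [this, ← Complex.ofReal_mul]
        exact Complex.ofReal_im _
  set w := c • x with hw
  have hw1 : star w ⬝ᵥ w = 1 := by rw [hw, dot_smul_smul, hc1, hx, mul_one]
  have hqw : star w ⬝ᵥ M *ᵥ w = 0 := by rw [hw, q_smul, h0, mul_zero]
  set s := star w ⬝ᵥ M *ᵥ y + star y ⬝ᵥ M *ᵥ w with hs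
  have hsim : s.im = 0 := by
    have e1 : star w ⬝ᵥ M *ᵥ y = starRingEnd ℂ c * a := by
      rw [hw, ha]; simp [star_smul, smul_dotProduct, smul_eq_mul, Complex.star_def]
    have e2 : star y ⬝ᵥ M *ᵥ w = c * b := by
      rw [hw, hb, mulVec_smul, dotProduct_smul, smul_eq_mul]
    rw [hs, e1, e2]
    have : (starRingEnd ℂ c * a + c * b).im = (c * d).im := by
      rw [hd]
      simp [Complex.mul_im, Complex.add_im, Complex.sub_im, Complex.sub_re,
        Complex.conj_re, Complex.conj_im]
      ring
    rw [this, hc2]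
  set zf : ℝ → (m → ℂ) := fun t => ((1 - t : ℝ) : ℂ) • w + (t : ℂ) • y with hzf
  have hqz : ∀ t : ℝ, star (zf t) ⬝ᵥ M *ᵥ (zf t)
      = ((t * (1 - t) : ℝ) : ℂ) * s + ((t : ℝ) : ℂ) ^ 2 := by
    intro t
    rw [hzf]
    simp only [q_expand, hqw, h1, Complex.conj_ofReal, hs]
    push_cast
    ring
  have hdz : ∀ t : ℝ, star (zf t) ⬝ᵥ (zf t)
      = ((∑ i, Complex.normSq (zf t i) : ℝ) : ℂ) := fun t => star_dot_self _
  set g : ℝ → ℝ := fun t => ∑ i, Complex.normSq (zf t i) with hg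
  -- zf t ≠ 0 on [0,1]
  have hz0 : ∀ t : ℝ, 0 ≤ t → t ≤ 1 → zf t ≠ 0 := by
    intro t ht0 ht1 hzero
    have heq : ((t : ℝ) : ℂ) • y = (((t - 1 : ℝ)) : ℂ) • w := by
      have := hzero
      rw [hzf] at this
      simp only at this
      have h' : ((t : ℝ) : ℂ) • y = -(((1 - t : ℝ) : ℂ) • w) := by
        rw [add_comm] at this
        exact (add_eq_zero_iff_eq_neg).mp this
      rw [h']
      push_cast
      rw [← neg_smul]
      ring_nf
    have hnorm : ((t : ℝ) : ℂ) ^ 2 = (((t - 1 : ℝ)) : ℂ) ^ 2 := by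
      have := congrArg (fun v => star v ⬝ᵥ v) heq
      simp only [dot_smul_smul] at this
      rw [hy, hw1] at this
      simpa [Complex.conj_ofReal, sq] using this
    have ht : t ^ 2 = (t - 1) ^ 2 := by exact_mod_cast hnorm
    have ht2 : t = 1 / 2 := by nlinarith
    have hyw : y = -w := by
      rw [ht2] at heq
      have h2 := congrArg (fun v => (2 : ℂ) • v) heq
      simp only [smul_smul] at h2
      norm_num at h2
      exact h2
    have : star y ⬝ᵥ M *ᵥ y = 0 := by
      rw [hyw]
      have : -w = ((-1 : ℂ)) • w := by rw [neg_smul, one_smul]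
      rw [this, q_smul, hqw, mul_zero]
    rw [h1] at this
    exact one_ne_zero this
  have hgpos : ∀ t : ℝ, 0 ≤ t → t ≤ 1 → 0 < g t := by
    intro t ht0 ht1
    have hne := hz0 t ht0 ht1
    have : ∃ i, zf t i ≠ 0 := by
      by_contra h
      push_neg at h
      exact hne (funext h)
    obtain ⟨i, hi⟩ := this
    exact Finset.sum_pos' (fun j _ => Complex.normSq_nonneg _)
      ⟨i, Finset.mem_univ i, Complex.normSq_pos.mpr hi⟩
  -- continuity
  have hzc : ∀ i, Continuous fun t : ℝ => zf t i := by
    intro i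
    simp only [hzf, Pi.add_apply, Pi.smul_apply, smul_eq_mul]
    fun_prop
  have hgc : Continuous g := by
    rw [hg]
    exact continuous_finset_sum _ fun i _ => Complex.continuous_normSq.comp (hzc i)
  set f : ℝ → ℝ := fun t => (t * (1 - t) * s.re + t ^ 2) / g t with hf
  have hfc : ContinuousOn f (Set.Icc 0 1) := by
    apply ContinuousOn.div
    · fun_prop
    · exact hgc.continuousOn
    · intro t ht
      exact (hgpos t ht.1 ht.2).ne'
  have hg0 : g 0 = 1 := by
    have : star (zf 0) ⬝ᵥ (zf 0) = 1 := by
      have : zf 0 = w := by rw [hzf]; push_cast; simp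
      rw [this, hw1]
    rw [hdz 0] at this
    exact_mod_cast this
  have hg1 : g 1 = 1 := by
    have : star (zf 1) ⬝ᵥ (zf 1) = 1 := by
      have : zf 1 = y := by rw [hzf]; push_cast; simp
      rw [this, hy]
    rw [hdz 1] at this
    exact_mod_cast this
  have hf0 : f 0 = 0 := by rw [hf]; simp
  have hf1 : f 1 = 1 := by rw [hf]; simp [hg1]
  have hivt := intermediate_value_Icc (by norm_num : (0:ℝ) ≤ 1) hfc
  rw [hf0, hf1] at hivt
  obtain ⟨t, ht, hft⟩ := hivt ⟨hr0, hr1⟩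
  -- normalize
  set gt := g t with hgt
  have hgtpos : 0 < gt := hgpos t ht.1 ht.2
  have hs2 : Real.sqrt gt * Real.sqrt gt = gt := Real.mul_self_sqrt hgtpos.le
  have hsne : Real.sqrt gt ≠ 0 := (Real.sqrt_pos.mpr hgtpos).ne'
  have hinv : (Real.sqrt gt)⁻¹ * (Real.sqrt gt)⁻¹ = gt⁻¹ := by
    rw [← mul_inv, hs2]
  have hnum : t * (1 - t) * s.re + t ^ 2 = r * gt := by
    have h' := hft
    rw [hf] at h'
    simp only at h'
    rw [div_eq_iff hgtpos.ne'] at h'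
    exact h'
  refine ⟨(((Real.sqrt gt)⁻¹ : ℝ) : ℂ) • zf t, ?_, ?_⟩
  · rw [dot_smul_smul, hdz t, Complex.conj_ofReal]
    have hsum : (∑ i, Complex.normSq (zf t i)) = gt := rfl
    rw [hsum]
    have hreal : (Real.sqrt gt)⁻¹ * (Real.sqrt gt)⁻¹ * gt = 1 := by
      rw [hinv]; field_simp
    exact_mod_cast hreal
  · rw [q_smul, hqz t, Complex.conj_ofReal]
    have hsre : s = (s.re : ℂ) := Complex.ext rfl (by simp [hsim])
    rw [hsre]
    have hreal : (Real.sqrt gt)⁻¹ * (Real.sqrt gt)⁻¹ * (t * (1 - t) * s.re + t ^ 2) = r := by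
      rw [hinv, hnum]
      field_simp
    exact_mod_cast hreal

lemma convex_nr [DecidableEq m] (M : Matrix m m ℂ) : Convex ℝ (numericalRange M) := by
  intro z1 hz1 z2 hz2 p q hp hq hpq
  by_cases hzz : z1 = z2
  · subst hzz
    rw [← add_smul, hpq, one_smul]
    exact hz1
  · rw [mem_nr_iff] at hz1 hz2
    obtain ⟨x1, hx1, hv1⟩ := hz1
    obtain ⟨x2, hx2, hv2⟩ := hz2
    set cδ : ℂ := z2 - z1 with hcδ
    have hcne : cδ ≠ 0 := sub_ne_zero.mpr (Ne.symm hzz)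
    set M' : Matrix m m ℂ := cδ⁻¹ • (M - z1 • 1) with hM'
    have hq' : ∀ v : m → ℂ, star v ⬝ᵥ M' *ᵥ v
        = cδ⁻¹ * (star v ⬝ᵥ M *ᵥ v - z1 * (star v ⬝ᵥ v)) := by
      intro v
      rw [hM']
      rw [smul_mulVec, sub_mulVec, smul_mulVec, one_mulVec]
      rw [dotProduct_smul, dotProduct_sub, dotProduct_smul]
      simp [smul_eq_mul]
    have h0' : star x1 ⬝ᵥ M' *ᵥ x1 = 0 := by
      rw [hq' x1, hx1, ← hv1]
      simp
    have h1' : star x2 ⬝ᵥ M' *ᵥ x2 = 1 := by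
      rw [hq' x2, hx2, ← hv2]
      field_simp
      rw [hcδ]
    have hq1 : q ≤ 1 := by linarith
    obtain ⟨z, hz, hqz⟩ := toeplitz_key M' hx1 hx2 h0' h1' hq hq1
    rw [hq' z, hz] at hqz
    have hval : star z ⬝ᵥ M *ᵥ z = z1 + (q : ℂ) * cδ := by
      field_simp at hqz
      linear_combination hqz
    rw [mem_nr_iff]
    refine ⟨z, hz, ?_⟩
    rw [hval, hcδ]
    have hpq' : (p : ℂ) + (q : ℂ) = 1 := by exact_mod_cast hpq
    simp only [Complex.real_smul]
    linear_combination (z1 : ℂ) * hpq'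

lemma conj_dot (V W : Matrix m m ℂ) (x : m → ℂ) :
    star (V *ᵥ x) ⬝ᵥ W *ᵥ (V *ᵥ x) = star x ⬝ᵥ (Vᴴ * W * V) *ᵥ x := by
  rw [star_mulVec]
  rw [dotProduct_mulVec, vecMul_vecMul, dotProduct_mulVec, vecMul_vecMul]
  rw [← dotProduct_mulVec, mul_assoc]

lemma nr_conj_subset [DecidableEq m] (V M : Matrix m m ℂ) (h1 : Vᴴ * V = 1) :
    numericalRange (Vᴴ * M * V) ⊆ numericalRange M := by
  intro z hz
  rw [mem_nr_iff] at hz ⊢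
  obtain ⟨x, hx, rfl⟩ := hz
  refine ⟨V *ᵥ x, ?_, ?_⟩
  · have := conj_dot V 1 x
    simp only [one_mulVec, mul_one] at this
    rw [this, h1, one_mulVec, hx]
  · rw [conj_dot]

lemma nr_conj [DecidableEq m] (V M : Matrix m m ℂ) (h1 : Vᴴ * V = 1) (h2 : V * Vᴴ = 1) :
    numericalRange (Vᴴ * M * V) = numericalRange M := by
  refine subset_antisymm (nr_conj_subset V M h1) ?_
  have h3 : (Vᴴ)ᴴ * (Vᴴ * M * V) * Vᴴ = M := by
    rw [conjTranspose_conjTranspose]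
    have : V * (Vᴴ * M * V) * Vᴴ = (V * Vᴴ) * M * (V * Vᴴ) := by
      noncomm_ring
    rw [this, h2]
    simp
  have := nr_conj_subset Vᴴ (Vᴴ * M * V)
    (by rw [conjTranspose_conjTranspose]; exact h2)
  rwa [h3] at this

lemma star_sum_elim {k l : Type*} (u : k → ℂ) (v : l → ℂ) :
    star (Sum.elim u v) = Sum.elim (star u) (star v) := by
  funext i
  cases i <;> simp

lemma q2_eval (b l : ℂ) (w : Fin 2 → ℂ) :
    star w ⬝ᵥ (!![0, l; -b, (1 + b) * l]) *ᵥ w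
      = starRingEnd ℂ (w 0) * (l * w 1)
        + starRingEnd ℂ (w 1) * (-b * w 0 + (1 + b) * (l * w 1)) := by
  simp only [mulVec, dotProduct, Fin.sum_univ_two, Matrix.of_apply, Matrix.cons_val',
    Matrix.cons_val_zero, Matrix.cons_val_one, Matrix.head_cons, Matrix.head_fin_const,
    Matrix.empty_val', Matrix.cons_val_fin_one, Pi.star_apply, Complex.star_def]
  ring

lemma dot2_eval (w : Fin 2 → ℂ) :
    star w ⬝ᵥ w = ((Complex.normSq (w 0) + Complex.normSq (w 1) : ℝ) : ℂ) := by
  simp [dotProduct, Fin.sum_univ_two, Complex.normSq_eq_conj_mul_self, Complex.star_def]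

lemma qd_eval {N : ℕ} (b : ℂ) (d : Fin N → ℂ) (u v : Fin N → ℂ) :
    star (Sum.elim u v) ⬝ᵥ
        (fromBlocks (0 : Matrix (Fin N) (Fin N) ℂ) (diagonal d)
          ((-b) • 1) ((1 + b) • diagonal d)) *ᵥ (Sum.elim u v)
      = ∑ j, (starRingEnd ℂ (u j) * (d j * v j)
          + starRingEnd ℂ (v j) * (-b * u j + (1 + b) * (d j * v j))) := by
  rw [fromBlocks_mulVec, star_sum_elim]
  rw [Sum.elim_comp_inl, Sum.elim_comp_inr]
  rw [sumElim_dotProduct_sumElim]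
  rw [zero_mulVec, zero_add, smul_mulVec, one_mulVec, smul_mulVec]
  simp only [dotProduct, mulVec_diagonal, Pi.add_apply, Pi.smul_apply, smul_eq_mul,
    Pi.star_apply, Complex.star_def]
  rw [← Finset.sum_add_distrib]

lemma dotd_eval {N : ℕ} (u v : Fin N → ℂ) :
    star (Sum.elim u v) ⬝ᵥ Sum.elim u v
      = ((∑ j, (Complex.normSq (u j) + Complex.normSq (v j)) : ℝ) : ℂ) := by
  rw [star_sum_elim, sumElim_dotProduct_sumElim, star_dot_self, star_dot_self,
    ← Complex.ofReal_add, Finset.sum_add_distrib]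

lemma nr_Gd {N : ℕ} (b : ℂ) (d : Fin N → ℂ) :
    numericalRange (fromBlocks (0 : Matrix (Fin N) (Fin N) ℂ) (diagonal d)
        ((-b) • 1) ((1 + b) • diagonal d))
      = convexHull ℝ (⋃ j : Fin N, numericalRange (!![0, d j; -b, (1 + b) * d j])) := by
  apply subset_antisymm
  · -- W(G) ⊆ hull
    intro z hz
    rw [mem_nr_iff] at hz
    obtain ⟨x, hx, rfl⟩ := hz
    set u : Fin N → ℂ := x ∘ Sum.inl with hu
    set v : Fin N → ℂ := x ∘ Sum.inr with hv
    have hxe : x = Sum.elim u v := by funext i; cases i <;> rfl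
    set t : Fin N → ℝ := fun j => Complex.normSq (u j) + Complex.normSq (v j) with htdef
    have htnn : ∀ j, 0 ≤ t j := fun j =>
      add_nonneg (Complex.normSq_nonneg _) (Complex.normSq_nonneg _)
    have htsum : ∑ j, t j = 1 := by
      have := hx
      rw [hxe, dotd_eval] at this
      exact_mod_cast this
    set e : Fin N → ℂ := fun j => starRingEnd ℂ (u j) * (d j * v j)
        + starRingEnd ℂ (v j) * (-b * u j + (1 + b) * (d j * v j)) with hedef
    set p : Fin N → ℂ := fun j => if t j = 0 then 0 else ((t j)⁻¹ : ℝ) * e j with hpdef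
    have hpmem : ∀ j, p j ∈ numericalRange (!![0, d j; -b, (1 + b) * d j]) := by
      intro j
      rw [mem_nr_iff]
      by_cases h0 : t j = 0
      · refine ⟨![1, 0], ?_, ?_⟩
        · rw [dot2_eval]; norm_num
        · rw [q2_eval]; simp [hpdef, h0]
      · have htpos : 0 < t j := lt_of_le_of_ne (htnn j) (Ne.symm h0)
        have hs2 : Real.sqrt (t j) * Real.sqrt (t j) = t j := Real.mul_self_sqrt htpos.le
        refine ⟨(((Real.sqrt (t j))⁻¹ : ℝ) : ℂ) • ![u j, v j], ?_, ?_⟩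
        · rw [dot_smul_smul, Complex.conj_ofReal, dot2_eval]
          have : (Real.sqrt (t j))⁻¹ * (Real.sqrt (t j))⁻¹
              * (Complex.normSq (u j) + Complex.normSq (v j)) = 1 := by
            rw [← mul_inv, hs2]
            field_simp
            rfl
          simp only [Matrix.cons_val_zero, Matrix.cons_val_one, Matrix.head_cons]
          exact_mod_cast this
        · rw [q_smul, Complex.conj_ofReal, q2_eval]
          simp only [Matrix.cons_val_zero, Matrix.cons_val_one, Matrix.head_cons]
          rw [hpdef]
          simp only [h0, if_false]
          rw [← Complex.ofReal_mul, ← mul_inv, hs2, hedef]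
      -- done
    have hval : star x ⬝ᵥ (fromBlocks (0 : Matrix (Fin N) (Fin N) ℂ) (diagonal d)
        ((-b) • 1) ((1 + b) • diagonal d)) *ᵥ x = ∑ j, t j • p j := by
      rw [hxe, qd_eval]
      refine Finset.sum_congr rfl fun j _ => ?_
      by_cases h0 : t j = 0
      · have hu0 : u j = 0 := by
          have := h0
          rw [htdef] at this
          simp only at this
          have h1 : Complex.normSq (u j) = 0 := by
            nlinarith [Complex.normSq_nonneg (u j), Complex.normSq_nonneg (v j)]
          exact Complex.normSq_eq_zero.mp h1
        have hv0 : v j = 0 := by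
          have := h0
          rw [htdef] at this
          simp only at this
          have h1 : Complex.normSq (v j) = 0 := by
            nlinarith [Complex.normSq_nonneg (u j), Complex.normSq_nonneg (v j)]
          exact Complex.normSq_eq_zero.mp h1
        simp [hpdef, h0, hu0, hv0]
      · simp only [hpdef, h0, if_false, Complex.real_smul]
        have hcan : ((t j : ℝ) : ℂ) * (((t j)⁻¹ : ℝ) * e j) = e j := by
          rw [← mul_assoc, ← Complex.ofReal_mul, mul_inv_cancel₀ h0, Complex.ofReal_one, one_mul]
        rw [hcan]
    rw [hval]
    apply (convex_convexHull ℝ _).sum_mem (fun j _ => htnn j) htsum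
    intro j _
    exact subset_convexHull ℝ _ (Set.mem_iUnion.mpr ⟨j, hpmem j⟩)
  · -- hull ⊆ W(G)
    apply convexHull_min
    · apply Set.iUnion_subset
      intro j z hz
      rw [mem_nr_iff] at hz ⊢
      obtain ⟨w, hw, rfl⟩ := hz
      set u : Fin N → ℂ := fun i => if i = j then w 0 else 0 with hu
      set v : Fin N → ℂ := fun i => if i = j then w 1 else 0 with hv
      refine ⟨Sum.elim u v, ?_, ?_⟩
      · rw [dotd_eval]
        rw [dot2_eval] at hw
        have : ∀ i, Complex.normSq (u i) + Complex.normSq (v i)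
            = if i = j then Complex.normSq (w 0) + Complex.normSq (w 1) else 0 := by
          intro i
          by_cases h : i = j <;> simp [hu, hv, h]
        rw [Finset.sum_congr rfl fun i _ => this i]
        rw [Finset.sum_ite_eq' Finset.univ j _]
        simpa using hw
      · rw [qd_eval, q2_eval]
        rw [Finset.sum_eq_single j]
        · simp [hu, hv]
        · intro i _ hij
          simp [hu, hv, hij]
        · intro h
          exact absurd (Finset.mem_univ j) h
    · exact convex_nr _

end NRAux

/-- For `A` real symmetric with eigenvalues `λ_1, …, λ_n` and
`β ∈ ℝ`, the numerical range of the Nesterov block operator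
`G = [[0, A], [-βI, (1+β)A]]` is the convex hull of the numerical ranges of the
`2×2` matrices `G_j = [[0, λ_j], [-β, (1+β)λ_j]]`. -/
theorem numericalRange_nesterov_block_eq_convexHull
    (n : ℕ) (A : Matrix (Fin n) (Fin n) ℝ) (hA : A.IsHermitian) (β : ℝ) :
    numericalRange
        (Matrix.fromBlocks (0 : Matrix (Fin n) (Fin n) ℂ) (A.map Complex.ofReal)
          ((-β : ℂ) • (1 : Matrix (Fin n) (Fin n) ℂ))
          (((1 : ℂ) + β) • A.map Complex.ofReal)) =
      convexHull ℝ
        (⋃ j : Fin n, numericalRange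
          (!![(0 : ℂ), (hA.eigenvalues j : ℂ);
              (-β : ℂ), ((1 : ℂ) + β) * (hA.eigenvalues j : ℂ)])) := by
  classical
  set U0 : Matrix (Fin n) (Fin n) ℝ := (hA.eigenvectorUnitary : Matrix (Fin n) (Fin n) ℝ)
    with hU0
  set U : Matrix (Fin n) (Fin n) ℂ := U0.map Complex.ofReal with hUdef
  set d : Fin n → ℂ := fun j => (hA.eigenvalues j : ℂ) with hddef
  have hmap : ∀ (X Y : Matrix (Fin n) (Fin n) ℝ),
      (X * Y).map Complex.ofReal = X.map Complex.ofReal * Y.map Complex.ofReal := by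
    intro X Y
    exact Matrix.map_mul (f := Complex.ofRealHom)
  have hstarmap : ∀ (X : Matrix (Fin n) (Fin n) ℝ),
      (X.map Complex.ofReal)ᴴ = (star X).map Complex.ofReal := by
    intro X
    rw [Matrix.star_eq_conjTranspose]
    exact (Matrix.conjTranspose_map Complex.ofReal
      (fun a => by simp [Complex.conj_ofReal])).symm
  have honemap : ((1 : Matrix (Fin n) (Fin n) ℝ)).map Complex.ofReal = 1 :=
    Matrix.map_one _ Complex.ofReal_zero Complex.ofReal_one
  have hU1 : Uᴴ * U = 1 := by
    rw [hUdef, hstarmap, ← hmap, Matrix.mem_unitaryGroup_iff'.mp hA.eigenvectorUnitary.2,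
      honemap]
  have hU2 : U * Uᴴ = 1 := by
    rw [hUdef, hstarmap, ← hmap, Matrix.mem_unitaryGroup_iff.mp hA.eigenvectorUnitary.2,
      honemap]
  have hdiag : (diagonal (RCLike.ofReal ∘ hA.eigenvalues)
      : Matrix (Fin n) (Fin n) ℝ).map Complex.ofReal = diagonal d := by
    rw [Matrix.diagonal_map Complex.ofReal_zero]
    congr 1
  have hAc : A.map Complex.ofReal = U * diagonal d * Uᴴ := by
    conv_lhs => rw [hA.spectral_theorem]
    rw [Unitary.conjStarAlgAut_apply, hmap, hmap, hdiag, ← hstarmap]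
  have e1 : Uᴴ * (A.map Complex.ofReal) * U = diagonal d := by
    rw [hAc]
    have : Uᴴ * (U * diagonal d * Uᴴ) * U = (Uᴴ * U) * diagonal d * (Uᴴ * U) := by
      noncomm_ring
    rw [this, hU1, one_mul, mul_one]
  have e1' : Uᴴ * (A.map Complex.ofReal * U) = diagonal d := by
    rw [← Matrix.mul_assoc]; exact e1
  set V : Matrix (Fin n ⊕ Fin n) (Fin n ⊕ Fin n) ℂ := fromBlocks U 0 0 U with hVdef
  have hV1 : Vᴴ * V = 1 := by
    rw [hVdef, fromBlocks_conjTranspose]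
    rw [fromBlocks_multiply]
    simp [hU1, fromBlocks_one]
  have hV2 : V * Vᴴ = 1 := by
    rw [hVdef, fromBlocks_conjTranspose]
    rw [fromBlocks_multiply]
    simp [hU2, fromBlocks_one]
  have hGG : Vᴴ * (Matrix.fromBlocks (0 : Matrix (Fin n) (Fin n) ℂ) (A.map Complex.ofReal)
      ((-β : ℂ) • (1 : Matrix (Fin n) (Fin n) ℂ)) (((1 : ℂ) + β) • A.map Complex.ofReal)) * V
      = fromBlocks 0 (diagonal d) ((-(β : ℂ)) • 1) ((1 + (β : ℂ)) • diagonal d) := by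
    rw [hVdef, fromBlocks_conjTranspose, conjTranspose_zero, fromBlocks_multiply,
      fromBlocks_multiply]
    simp only [Matrix.zero_mul, Matrix.mul_zero, smul_zero, add_zero, zero_add,
      Matrix.smul_mul, Matrix.mul_smul, Matrix.mul_one, Matrix.mul_assoc, Matrix.add_mul,
      e1', hU1]
  rw [← nr_conj V _ hV1 hV2, hGG, nr_Gd (β : ℂ) d]
end

section
/- For the Nesterov operator G = [[0, A], [-βI, (1+β)A]] with A symmetric, 0 ≺ A ≺ I with largest eigenvalue λ_n = 1 - μ/L and β = (√L - √μ)/(√L + √μ), the maximum real value of the numerical range is re(G) = (1/2)( (1+β)λ_n + sqrt( λ_n²(1+β)² + (λ_n - β)² ) ). -/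
open Matrix

lemma aux_quad (p q r s t : ℝ) (hp : 0 < p) (hq : 0 ≤ q) (hr : 0 ≤ r)
    (hrsq : r^2 = p^2 + q^2) :
    q*s*t + p*t^2 ≤ (p+r)/2 * (s^2+t^2) := by
  have hrp : p ≤ r := by nlinarith [sq_nonneg (r - p), sq_nonneg (r + p)]
  nlinarith [sq_nonneg ((p+r)*s - q*t), mul_pos hp hp, sq_nonneg q]

lemma aux_mono (β l1 l2 : ℝ) (hb : 0 < β) (h1 : 0 < l1) (h12 : l1 ≤ l2) :
    (1+β)*l1 + Real.sqrt (((1+β)*l1)^2 + (l1-β)^2)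
      ≤ (1+β)*l2 + Real.sqrt (((1+β)*l2)^2 + (l2-β)^2) := by
  set r1 := Real.sqrt (((1+β)*l1)^2 + (l1-β)^2) with hr1def
  set r2 := Real.sqrt (((1+β)*l2)^2 + (l2-β)^2) with hr2def
  have hr1 : 0 ≤ r1 := Real.sqrt_nonneg _
  have hr2 : 0 ≤ r2 := Real.sqrt_nonneg _
  have hr1sq : r1^2 = ((1+β)*l1)^2 + (l1-β)^2 := Real.sq_sqrt (by positivity)
  have hr2sq : r2^2 = ((1+β)*l2)^2 + (l2-β)^2 := Real.sq_sqrt (by positivity)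
  have hb2 : β - l2 ≤ r2 := by
    have h : |l2 - β| ≤ r2 := by
      rw [← Real.sqrt_sq_eq_abs]
      exact Real.sqrt_le_sqrt (by nlinarith [sq_nonneg ((1+β)*l2)])
    have := neg_abs_le (l2 - β)
    linarith
  have hpos : 0 ≤ (1+β)*(l2-l1) + r2 := by nlinarith
  have hd : (0:ℝ) ≤ l2 - l1 := by linarith
  have hl2 : 0 < l2 := lt_of_lt_of_le h1 h12
  have hbr : (0:ℝ) ≤ l2*(2*β^2+2*β+1) + l1 + 2*β^2 := by positivity
  have key : r1^2 ≤ ((1+β)*(l2-l1) + r2)^2 := by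
    nlinarith [mul_le_mul_of_nonneg_left hb2
      (mul_nonneg (by linarith : (0:ℝ) ≤ 2*(1+β)) hd), mul_nonneg hd hbr]
  have : r1 ≤ (1+β)*(l2-l1) + r2 := by
    have := Real.sqrt_le_sqrt key
    rwa [Real.sqrt_sq hr1, Real.sqrt_sq hpos] at this
  linarith

lemma star_mulVec_dot {m : Type*} [Fintype m] (M : Matrix m m ℂ) (u w : m → ℂ) :
    star (M *ᵥ u) ⬝ᵥ w = star u ⬝ᵥ (Mᴴ *ᵥ w) := by
  rw [Matrix.star_mulVec, Matrix.dotProduct_mulVec]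

lemma star_dot_self_s11 {m : Type*} [Fintype m] (y : m → ℂ) :
    star y ⬝ᵥ y = ((∑ k, ‖y k‖^2 : ℝ) : ℂ) := by
  have h : ∀ k, star (y k) * y k = ((‖y k‖^2 : ℝ) : ℂ) := by
    intro k
    rw [show star (y k) = starRingEnd ℂ (y k) from rfl, Complex.conj_mul']
    push_cast
    ring
  simp only [dotProduct, Pi.star_apply, h]
  exact (Complex.ofReal_sum _ _).symm

set_option maxHeartbeats 1600000

/-- For the Nesterov operator `G = [[0, A], [-βI, (1+β)A]]`
with `A` symmetric, `0 ≺ A ≺ I`, largest eigenvalue `λ_n = 1 - μ/L` and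
`β = (√L - √μ)/(√L + √μ)`, the maximum real value of the numerical range is
`re(G) = ½((1+β)λ_n + √(λ_n²(1+β)² + (λ_n - β)²))`. -/
theorem max_re_numericalRange_nesterov
    (n : ℕ) (A : Matrix (Fin n) (Fin n) ℝ) (hA : A.IsHermitian)
    (μ L : ℝ) (hμ : 0 < μ) (hμL : μ < L)
    (β lamn : ℝ)
    (hβ : β = (Real.sqrt L - Real.sqrt μ) / (Real.sqrt L + Real.sqrt μ))
    (hlamn : lamn = 1 - μ / L)
    (heigpos : ∀ i, 0 < hA.eigenvalues i)
    (heigle : ∀ i, hA.eigenvalues i ≤ lamn)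
    (heigmax : ∃ i, hA.eigenvalues i = lamn) :
    IsGreatest
      ((fun z : ℂ => z.re) ''
        numericalRange
          (Matrix.fromBlocks (0 : Matrix (Fin n) (Fin n) ℂ) (A.map Complex.ofReal)
            ((-β : ℂ) • (1 : Matrix (Fin n) (Fin n) ℂ))
            (((1 : ℂ) + β) • A.map Complex.ofReal)))
      ((1 / 2) * ((1 + β) * lamn +
        Real.sqrt (lamn ^ 2 * (1 + β) ^ 2 + (lamn - β) ^ 2))) := by
  -- basic facts
  have hL : 0 < L := hμ.trans hμL
  have hsμ : 0 < Real.sqrt μ := Real.sqrt_pos.2 hμ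
  have hsL : Real.sqrt μ < Real.sqrt L := Real.sqrt_lt_sqrt hμ.le hμL
  have hβpos : 0 < β := by
    rw [hβ]; exact div_pos (by linarith) (by linarith)
  have hlpos : 0 < lamn := by
    rw [hlamn]
    have : μ / L < 1 := (div_lt_one hL).2 hμL
    linarith
  -- spectral setup
  set U : Matrix (Fin n) (Fin n) ℝ := (hA.eigenvectorUnitary : Matrix (Fin n) (Fin n) ℝ)
    with hUdef
  set U' : Matrix (Fin n) (Fin n) ℂ := U.map Complex.ofReal with hU'def
  set D' : Matrix (Fin n) (Fin n) ℂ := diagonal (fun i => ((hA.eigenvalues i : ℝ) : ℂ))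
    with hD'def
  have hmapmul : ∀ (M N : Matrix (Fin n) (Fin n) ℝ),
      (M*N).map Complex.ofReal = M.map Complex.ofReal * N.map Complex.ofReal := by
    intro M N
    exact Matrix.map_mul (f := Complex.ofRealHom)
  have hUstar : U'ᴴ = (star U).map Complex.ofReal := by
    ext i j
    simp [hU'def, Matrix.conjTranspose_apply, Matrix.map_apply, Matrix.star_apply]
  have hUU : U'ᴴ * U' = 1 := by
    rw [hUstar, hU'def, ← hmapmul, Unitary.coe_star_mul_self hA.eigenvectorUnitary]
    exact Matrix.map_one _ Complex.ofReal_zero Complex.ofReal_one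
  have hUU' : U' * U'ᴴ = 1 := by
    rw [hUstar, hU'def, ← hmapmul]
    rw [show U * star U = 1 from by simp [hUdef]]
    exact Matrix.map_one _ Complex.ofReal_zero Complex.ofReal_one
  have hspec : A.map Complex.ofReal = U' * D' * U'ᴴ := by
    have h := hA.spectral_theorem
    rw [RCLike.ofReal_real_eq_id] at h
    simp only [Function.id_comp] at h
    rw [h, Unitary.conjStarAlgAut_apply, hmapmul, hmapmul, hUstar, hU'def, hD'def]
    congr 1
    · congr 1
      exact Matrix.diagonal_map Complex.ofReal_zero
  -- target quantities
  set r : ℝ := Real.sqrt (lamn ^ 2 * (1 + β) ^ 2 + (lamn - β) ^ 2) with hrdef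
  have hrsq : r ^ 2 = ((1+β)*lamn)^2 + (lamn - β)^2 := by
    rw [hrdef, Real.sq_sqrt (by positivity)]; ring
  set p : ℝ := (1+β)*lamn with hpdef
  have hppos : 0 < p := by positivity
  have hrpos : 0 < r := by
    have : 0 < r^2 := by nlinarith [sq_nonneg (lamn - β)]
    positivity
  constructor
  · -- membership
    obtain ⟨i₀, hi₀⟩ := heigmax
    set e : Fin n → ℂ := Pi.single i₀ 1 with hedef
    set w : Fin n → ℂ := U' *ᵥ e with hwdef
    have hwA : (A.map Complex.ofReal) *ᵥ w = ((lamn : ℝ) : ℂ) • w := by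
      rw [hspec, hwdef, mulVec_mulVec, mul_assoc, mul_assoc, hUU, mul_one,
        ← mulVec_mulVec, diagonal_mulVec_single, hi₀]
      rw [show Pi.single i₀ ((lamn:ℂ) * 1) = ((lamn:ℝ):ℂ) • e from by
        funext k
        by_cases h : k = i₀ <;> simp [hedef, Pi.single_apply, h]]
      rw [mulVec_smul]
    have hw1 : star w ⬝ᵥ w = 1 := by
      rw [hwdef, star_mulVec_dot, mulVec_mulVec, hUU, one_mulVec, hedef]
      simp [dotProduct, Pi.single_apply, apply_ite]
    have hwsum : ∑ k, ‖w k‖^2 = 1 := by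
      have := (star_dot_self_s11 w).symm.trans hw1
      exact_mod_cast this
    -- the optimal coefficients
    set c : ℝ := lamn - β with hcdef
    set c2 : ℝ := Real.sqrt ((r+p)/(2*r)) with hc2def
    have hc2pos : 0 < c2 := Real.sqrt_pos.2 (by positivity)
    have hc2sq : c2^2 = (r+p)/(2*r) := Real.sq_sqrt (by positivity)
    set c1 : ℝ := c/(2*r*c2) with hc1def
    have hc1c2 : c1*c2 = c/(2*r) := by
      rw [hc1def]; field_simp
    have hc1sq : c1^2 = c^2/(2*r*(r+p)) := by
      rw [hc1def, div_pow, mul_pow, mul_pow, hc2sq]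
      rw [div_eq_div_iff (by positivity) (by positivity)]
      field_simp
    have hnorm12 : c1^2 + c2^2 = 1 := by
      rw [hc1sq, hc2sq, div_add_div _ _ (by positivity) (by positivity),
        div_eq_one_iff_eq (by positivity)]
      linear_combination (-2*r) * hrsq
    set u1 : Fin n → ℂ := ((c1:ℝ):ℂ) • w with hu1def
    set v1 : Fin n → ℂ := ((c2:ℝ):ℂ) • w with hv1def
    set xf : Fin n ⊕ Fin n → ℂ := Sum.elim u1 v1 with hxfdef
    have hval : star xf ⬝ᵥ
        (Matrix.fromBlocks 0 (A.map Complex.ofReal)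
          ((-β : ℂ) • 1) (((1 : ℂ) + β) • A.map Complex.ofReal)) *ᵥ xf
        = (((c1*c2*lamn - β*(c1*c2) + (1+β)*c2^2*lamn : ℝ)) : ℂ) := by
      have hstar : star xf = Sum.elim (star u1) (star v1) := by
        rw [hxfdef]; funext k; cases k <;> rfl
      rw [hstar, hxfdef, fromBlocks_mulVec, sumElim_dotProduct_sumElim]
      simp only [Sum.elim_comp_inl, Sum.elim_comp_inr, Matrix.zero_mulVec, zero_add,
        Matrix.smul_mulVec, Matrix.one_mulVec, hu1def, hv1def, mulVec_smul, hwA]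
      rw [star_smul, star_smul]
      push_cast
      simp only [smul_smul, dotProduct_add, dotProduct_smul, smul_dotProduct,
        smul_eq_mul, hw1, dotProduct_zero, mul_zero, add_zero, zero_add]
      simp only [Complex.star_def, Complex.conj_ofReal]
      ring
    refine ⟨_, ⟨WithLp.toLp 2 xf, ?_, rfl⟩, ?_⟩
    · rw [EuclideanSpace.norm_eq]
      rw [show (1:ℝ) = Real.sqrt 1 from (Real.sqrt_one).symm]
      congr 1
      rw [Fintype.sum_sum_type]
      simp only [PiLp.toLp_apply]
      have h1 : ∀ k : Fin n, ‖xf (Sum.inl k)‖^2 = c1^2 * ‖w k‖^2 := by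
        intro k
        have he : xf (Sum.inl k) = ((c1:ℝ):ℂ) * w k := rfl
        rw [he, norm_mul, mul_pow, Complex.norm_real, Real.norm_eq_abs, sq_abs]
      have h2 : ∀ k : Fin n, ‖xf (Sum.inr k)‖^2 = c2^2 * ‖w k‖^2 := by
        intro k
        have he : xf (Sum.inr k) = ((c2:ℝ):ℂ) * w k := rfl
        rw [he, norm_mul, mul_pow, Complex.norm_real, Real.norm_eq_abs, sq_abs]
      simp_rw [h1, h2, ← Finset.mul_sum, hwsum]
      linarith [hnorm12]
    · simp only [hval, Complex.ofReal_re]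
      -- show the value equals the claimed maximum
      rw [hc1c2, hc2sq]
      have hr0 : (r:ℝ) ≠ 0 := ne_of_gt hrpos
      field_simp
      linear_combination (-1:ℝ) * hrsq
  · -- upper bound
    rintro y ⟨z, ⟨x, hx1, hx2⟩, rfl⟩
    set u : Fin n → ℂ := fun k => x (Sum.inl k) with hudef
    set v : Fin n → ℂ := fun k => x (Sum.inr k) with hvdef
    set a : Fin n → ℂ := U'ᴴ *ᵥ u with hadef
    set b : Fin n → ℂ := U'ᴴ *ᵥ v with hbdef
    have hdot : ∀ y z : Fin n → ℂ,
        star y ⬝ᵥ z = star (U'ᴴ *ᵥ y) ⬝ᵥ (U'ᴴ *ᵥ z) := by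
      intro y z
      rw [star_mulVec_dot, conjTranspose_conjTranspose, mulVec_mulVec, hUU', one_mulVec]
    have hdotA : ∀ y z : Fin n → ℂ,
        star y ⬝ᵥ ((A.map Complex.ofReal) *ᵥ z)
          = star (U'ᴴ *ᵥ y) ⬝ᵥ (D' *ᵥ (U'ᴴ *ᵥ z)) := by
      intro y z
      rw [star_mulVec_dot, conjTranspose_conjTranspose, mulVec_mulVec, mulVec_mulVec,
        hspec]
    have hstar : star (Sum.elim u v) = Sum.elim (star u) (star v) := by
      funext k; cases k <;> rfl
    have hxfun : (x : Fin n ⊕ Fin n → ℂ) = Sum.elim u v := by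
      funext k; cases k <;> rfl
    have hz2 : z = star a ⬝ᵥ (D' *ᵥ b) + (-(β:ℂ)) * (star b ⬝ᵥ a)
        + ((1:ℂ)+β) * (star b ⬝ᵥ (D' *ᵥ b)) := by
      rw [hx2, hxfun, fromBlocks_mulVec, hstar, sumElim_dotProduct_sumElim]
      simp only [Sum.elim_comp_inl, Sum.elim_comp_inr, Matrix.zero_mulVec, zero_add,
        Matrix.smul_mulVec, Matrix.one_mulVec]
      rw [dotProduct_add, dotProduct_smul, dotProduct_smul]
      rw [hdotA u v, hdotA v v, hdot v u]
      simp only [smul_eq_mul]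
      push_cast
      ring
    -- expand as a sum over eigenvalues
    have hz3 : z = ∑ i, (starRingEnd ℂ (a i) * (((hA.eigenvalues i : ℝ):ℂ) * b i)
        + (-(β:ℂ)) * (starRingEnd ℂ (b i) * a i)
        + ((1:ℂ)+β) * (starRingEnd ℂ (b i) * (((hA.eigenvalues i : ℝ):ℂ) * b i))) := by
      rw [hz2]
      simp only [dotProduct, Pi.star_apply, mulVec_diagonal, hD'def,
        Complex.star_def]
      rw [Finset.mul_sum, Finset.mul_sum, ← Finset.sum_add_distrib,
        ← Finset.sum_add_distrib]
    have hre : z.re = ∑ i, ((hA.eigenvalues i - β)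
          * (starRingEnd ℂ (a i) * b i).re
        + (1+β) * hA.eigenvalues i * ‖b i‖^2) := by
      rw [hz3, Complex.re_sum]
      refine Finset.sum_congr rfl fun i _ => ?_
      set l : ℝ := hA.eigenvalues i
      have e1 : starRingEnd ℂ (a i) * (((l:ℝ):ℂ) * b i)
          = ((l:ℝ):ℂ) * (starRingEnd ℂ (a i) * b i) := by ring
      have e2 : (-(β:ℂ)) * (starRingEnd ℂ (b i) * a i)
          = ((-β:ℝ):ℂ) * (starRingEnd ℂ (b i) * a i) := by
        rw [Complex.ofReal_neg]
      have e3 : ((1:ℂ)+β) * (starRingEnd ℂ (b i) * (((l:ℝ):ℂ) * b i))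
          = (((1+β)*l : ℝ):ℂ) * (starRingEnd ℂ (b i) * b i) := by push_cast; ring
      rw [e1, e2, e3, Complex.add_re, Complex.add_re, Complex.re_ofReal_mul,
        Complex.re_ofReal_mul, Complex.re_ofReal_mul]
      have e4 : (starRingEnd ℂ (b i) * a i).re = (starRingEnd ℂ (a i) * b i).re := by
        rw [show starRingEnd ℂ (b i) * a i
            = starRingEnd ℂ (starRingEnd ℂ (a i) * b i) from by
          rw [_root_.map_mul]; simp [mul_comm]]
        exact Complex.conj_re _
      have e5 : (starRingEnd ℂ (b i) * b i).re = ‖b i‖^2 := by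
        rw [Complex.conj_mul', ← Complex.ofReal_pow]
        exact Complex.ofReal_re _
      rw [e4, e5]
      ring
    -- bound each term
    have hM : ∀ i, (hA.eigenvalues i - β) * (starRingEnd ℂ (a i) * b i).re
        + (1+β) * hA.eigenvalues i * ‖b i‖^2
        ≤ (1/2) * ((1+β)*lamn + r) * (‖a i‖^2 + ‖b i‖^2) := by
      intro i
      set l : ℝ := hA.eigenvalues i with hldef
      set s : ℝ := ‖a i‖
      set t : ℝ := ‖b i‖
      have hs : 0 ≤ s := norm_nonneg _
      have ht : 0 ≤ t := norm_nonneg _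
      have hl : 0 < l := heigpos i
      have hrho : (l - β) * (starRingEnd ℂ (a i) * b i).re ≤ |l - β| * (s*t) := by
        have h1 : |(starRingEnd ℂ (a i) * b i).re| ≤ s * t := by
          calc |(starRingEnd ℂ (a i) * b i).re| ≤ ‖starRingEnd ℂ (a i) * b i‖ :=
                Complex.abs_re_le_norm _
            _ = s * t := by rw [norm_mul, Complex.norm_conj]
        calc (l - β) * (starRingEnd ℂ (a i) * b i).re
            ≤ |(l - β) * (starRingEnd ℂ (a i) * b i).re| := le_abs_self _
          _ = |l - β| * |(starRingEnd ℂ (a i) * b i).re| := abs_mul _ _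
          _ ≤ |l - β| * (s * t) := by
              exact mul_le_mul_of_nonneg_left h1 (abs_nonneg _)
      set ri : ℝ := Real.sqrt (((1+β)*l)^2 + (l-β)^2) with hridef
      have hrisq : ri^2 = ((1+β)*l)^2 + |l-β|^2 := by
        rw [hridef, Real.sq_sqrt (by positivity), sq_abs]
      have hquad := aux_quad ((1+β)*l) |l-β| ri s t (by positivity) (abs_nonneg _)
        (Real.sqrt_nonneg _) hrisq
      have hmono : (1+β)*l + ri ≤ (1+β)*lamn + r := by
        have h := aux_mono β l lamn hβpos hl (heigle i)
        have heq : Real.sqrt (((1+β)*lamn)^2 + (lamn-β)^2) = r := by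
          rw [hrdef]; congr 1; ring
        rw [heq] at h
        rw [hridef]
        exact h
      calc (l - β) * (starRingEnd ℂ (a i) * b i).re + (1+β) * l * t^2
          ≤ |l - β| * (s*t) + (1+β)*l*t^2 := by linarith
        _ ≤ ((1+β)*l + ri)/2 * (s^2 + t^2) := by
            have := hquad; linarith [hquad]
        _ ≤ ((1+β)*lamn + r)/2 * (s^2 + t^2) := by
            apply mul_le_mul_of_nonneg_right _ (by positivity)
            linarith
        _ = (1/2) * ((1+β)*lamn + r) * (s^2 + t^2) := by ring
    -- sum of squares is 1
    have hxsum : ∑ k, ‖a k‖^2 + ∑ k, ‖b k‖^2 = 1 := by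
      have h1 : ∑ k : Fin n ⊕ Fin n, ‖x k‖^2 = 1 := by
        have h2 := hx1
        rw [EuclideanSpace.norm_eq] at h2
        exact Real.sqrt_eq_one.mp h2
      rw [Fintype.sum_sum_type] at h1
      have hau : star u ⬝ᵥ u = star a ⬝ᵥ a := hdot u u
      have hbv : star v ⬝ᵥ v = star b ⬝ᵥ b := hdot v v
      rw [star_dot_self_s11, star_dot_self_s11] at hau hbv
      have hau' : ∑ k, ‖u k‖^2 = ∑ k, ‖a k‖^2 := by
        exact_mod_cast hau
      have hbv' : ∑ k, ‖v k‖^2 = ∑ k, ‖b k‖^2 := by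
        exact_mod_cast hbv
      have hnu : ∀ k, ‖x (Sum.inl k)‖^2 = ‖u k‖^2 := by
        intro k; rfl
      have hnv : ∀ k, ‖x (Sum.inr k)‖^2 = ‖v k‖^2 := by
        intro k; rfl
      simp_rw [hnu, hnv] at h1
      rw [hau', hbv'] at h1
      exact h1
    calc z.re ≤ ∑ i, (1/2) * ((1+β)*lamn + r)
          * (‖a i‖^2 + ‖b i‖^2) := by
          rw [hre]; exact Finset.sum_le_sum fun i _ => hM i
      _ = (1/2) * ((1+β)*lamn + r)
          * (∑ i, (‖a i‖^2 + ‖b i‖^2)) := by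
          rw [Finset.mul_sum]
      _ = (1/2) * ((1+β)*lamn + r) := by
          rw [Finset.sum_add_distrib, hxsum, mul_one]
      _ = (1 / 2) * ((1 + β) * lamn + Real.sqrt (lamn ^ 2 * (1 + β) ^ 2 + (lamn - β) ^ 2)) := by
          rw [hrdef]
end
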